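/- Let P, Q ⊆ ℝ^n be the polyhedral cones generated by the matrices G ∈ ℝ^{n×p} and H ∈ ℝ^{n×q} with unit-norm columns, and assume Q ⊆ P*, where P* is the dual cone of P. Then min{⟨u,v⟩ : u ∈ P, ‖u‖ = 1, v ∈ Q, ‖v‖ = 1} = min_{i,j} ⟨g_i, h_j⟩, this minimum is attained at a pair of generator columns (g_i, h_j), and the minimum value is nonnegative (so the maximal angle between P and Q lies in [0, π/2]). -/

import Mathlib

open Matrix

/-- Euclidean norm of a vector in `ℝ^n`. -/
noncomputable def vnorm {n : ℕ} (v : Fin n → ℝ) : ℝ := Real.sqrt (v ⬝ᵥ v)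

/-- The polyhedral cone generated by the columns of `G`. -/
def coneOf {m p : ℕ} (G : Matrix (Fin m) (Fin p) ℝ) : Set (Fin m → ℝ) :=
  {u | ∃ x : Fin p → ℝ, (∀ i, 0 ≤ x i) ∧ u = G.mulVec x}

private lemma vnorm_eq_norm {n : ℕ} (v : Fin n → ℝ) :
    vnorm v = ‖(WithLp.equiv 2 (Fin n → ℝ)).symm v‖ := by
  rw [vnorm, EuclideanSpace.norm_eq]
  congr 1
  simp [dotProduct, Real.norm_eq_abs, sq_abs, pow_two]

private lemma col_mem_cone {n p : ℕ} (G : Matrix (Fin n) (Fin p) ℝ) (i : Fin p) :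
    (fun k => G k i) ∈ coneOf G := by
  refine ⟨Pi.single i 1, fun j => ?_, ?_⟩
  · rw [Pi.single_apply]; split <;> norm_num
  · simp [Matrix.mulVec_single]; rfl

private lemma sum_one_le {n p : ℕ} (G : Matrix (Fin n) (Fin p) ℝ)
    (hG : ∀ j, vnorm (fun i => G i j) = 1) (x : Fin p → ℝ) (hx : ∀ i, 0 ≤ x i)
    (hnorm : vnorm (G.mulVec x) = 1) : 1 ≤ ∑ i, x i := by
  have h1 : G.mulVec x = ∑ i, x i • (fun k => G k i) := by
    funext k
    simp [Matrix.mulVec, dotProduct, Finset.sum_apply, mul_comm]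
  have h2 : (WithLp.equiv 2 (Fin n → ℝ)).symm (G.mulVec x)
      = ∑ i, x i • (WithLp.equiv 2 (Fin n → ℝ)).symm (fun k => G k i) := by
    rw [h1]; exact map_sum (WithLp.linearEquiv 2 ℝ (Fin n → ℝ)).symm _ _
  calc 1 = vnorm (G.mulVec x) := hnorm.symm
    _ = ‖∑ i, x i • (WithLp.equiv 2 (Fin n → ℝ)).symm (fun k => G k i)‖ := by
        rw [vnorm_eq_norm, h2]
    _ ≤ ∑ i, ‖x i • (WithLp.equiv 2 (Fin n → ℝ)).symm (fun k => G k i)‖ :=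
        norm_sum_le _ _
    _ = ∑ i, x i := by
        refine Finset.sum_congr rfl fun i _ => ?_
        rw [norm_smul, Real.norm_eq_abs, abs_of_nonneg (hx i), ← vnorm_eq_norm, hG i,
          mul_one]

theorem stmt5 {n p q : ℕ} (hp : 0 < p) (hq : 0 < q)
    (G : Matrix (Fin n) (Fin p) ℝ) (H : Matrix (Fin n) (Fin q) ℝ)
    (hG : ∀ j, vnorm (fun i => G i j) = 1) (hH : ∀ j, vnorm (fun i => H i j) = 1)
    (hdual : ∀ w ∈ coneOf H, ∀ x ∈ coneOf G, 0 ≤ w ⬝ᵥ x) :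
    ∃ (i : Fin p) (j : Fin q),
      (∀ i' j', (Gᵀ * H) i j ≤ (Gᵀ * H) i' j') ∧
      (fun k => G k i) ⬝ᵥ (fun k => H k j) = (Gᵀ * H) i j ∧
      0 ≤ (Gᵀ * H) i j ∧
      (fun k => G k i) ∈ coneOf G ∧ vnorm (fun k => G k i) = 1 ∧
      (fun k => H k j) ∈ coneOf H ∧ vnorm (fun k => H k j) = 1 ∧
      ∀ u ∈ coneOf G, ∀ v ∈ coneOf H, vnorm u = 1 → vnorm v = 1 →
        (fun k => G k i) ⬝ᵥ (fun k => H k j) ≤ u ⬝ᵥ v := by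
  have hne : (Finset.univ : Finset (Fin p × Fin q)).Nonempty := by
    refine ⟨(⟨0, hp⟩, ⟨0, hq⟩), Finset.mem_univ _⟩
  obtain ⟨⟨i, j⟩, -, hmin⟩ :=
    Finset.exists_min_image Finset.univ (fun ij : Fin p × Fin q => (Gᵀ * H) ij.1 ij.2) hne
  have hmin' : ∀ i' j', (Gᵀ * H) i j ≤ (Gᵀ * H) i' j' := fun i' j' =>
    hmin (i', j') (Finset.mem_univ _)
  have hentry : ∀ (i' : Fin p) (j' : Fin q),
      (fun k => G k i') ⬝ᵥ (fun k => H k j') = (Gᵀ * H) i' j' := by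
    intro i' j'
    simp [Matrix.mul_apply, dotProduct, Matrix.transpose_apply]
  have hnonneg : 0 ≤ (Gᵀ * H) i j := by
    have := hdual _ (col_mem_cone H j) _ (col_mem_cone G i)
    rwa [dotProduct_comm, hentry] at this
  refine ⟨i, j, hmin', hentry i j, hnonneg, col_mem_cone G i, hG i, col_mem_cone H j,
    hH j, ?_⟩
  rintro u ⟨x, hx, rfl⟩ v ⟨y, hy, rfl⟩ hu hv
  rw [hentry i j]
  have key : (G.mulVec x) ⬝ᵥ (H.mulVec y) = x ⬝ᵥ ((Gᵀ * H).mulVec y) := by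
    rw [Matrix.dotProduct_mulVec, Matrix.dotProduct_mulVec, ← Matrix.vecMul_vecMul,
      Matrix.vecMul_transpose]
  rw [key]
  have hxsum : 1 ≤ ∑ i', x i' := sum_one_le G hG x hx hu
  have hysum : 1 ≤ ∑ j', y j' := sum_one_le H hH y hy hv
  have expand : (∑ i', x i') * (∑ j', y j') = ∑ i', ∑ j', x i' * y j' :=
    Finset.sum_mul_sum _ _ _ _
  have step1 : (Gᵀ * H) i j * ((∑ i', x i') * (∑ j', y j')) ≤ x ⬝ᵥ ((Gᵀ * H).mulVec y) := by
    have hrhs : x ⬝ᵥ ((Gᵀ * H).mulVec y)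
        = ∑ i', ∑ j', x i' * ((Gᵀ * H) i' j' * y j') := by
      simp [dotProduct, Matrix.mulVec, Finset.mul_sum]
    rw [hrhs, expand, Finset.mul_sum]
    refine Finset.sum_le_sum fun i' _ => ?_
    rw [Finset.mul_sum]
    refine Finset.sum_le_sum fun j' _ => ?_
    calc (Gᵀ * H) i j * (x i' * y j')
        ≤ (Gᵀ * H) i' j' * (x i' * y j') :=
          mul_le_mul_of_nonneg_right (hmin' i' j') (mul_nonneg (hx i') (hy j'))
      _ = x i' * ((Gᵀ * H) i' j' * y j') := by ring
  refine le_trans ?_ step1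
  have h1 : (1:ℝ) ≤ (∑ i', x i') * (∑ j', y j') := by nlinarith
  calc (Gᵀ * H) i j = (Gᵀ * H) i j * 1 := (mul_one _).symm
    _ ≤ (Gᵀ * H) i j * ((∑ i', x i') * (∑ j', y j')) :=
        mul_le_mul_of_nonneg_left h1 hnonneg
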